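/- The map m: ℂ² → ℝ³ given by m(z,w) = (Re(zw), Im(zw), ½(|z|² − |w|²)) is S¹-invariant, and the induced map from the orbit space ℂ²/S¹ to ℝ³ is a homeomorphism. -/

import Mathlib

/-- The action of `e^{iθ} ∈ S¹` on `ℂ²`, `e^{iθ}·(z,w) = (e^{iθ}z, e^{−iθ}w)`. -/
noncomputable def circleAct (θ : ℝ) (p : ℂ × ℂ) : ℂ × ℂ :=
  (Complex.exp (θ * Complex.I) * p.1, Complex.exp (-θ * Complex.I) * p.2)

/-- The orbit equivalence relation of the `S¹`-action on `ℂ²`. -/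
noncomputable def circleSetoid : Setoid (ℂ × ℂ) where
  r p q := ∃ θ : ℝ, q = circleAct θ p
  iseqv := by
    constructor
    · exact fun p => ⟨0, by simp [circleAct]⟩
    · rintro p q ⟨θ, rfl⟩
      refine ⟨-θ, ?_⟩
      refine Prod.ext ?_ ?_ <;>
        · simp only [circleAct, ← mul_assoc, ← Complex.exp_add]
          push_cast
          ring_nf
          simp
    · rintro p q v ⟨θ, rfl⟩ ⟨θ', rfl⟩
      refine ⟨θ + θ', ?_⟩
      refine Prod.ext ?_ ?_ <;>
        · simp only [circleAct, ← mul_assoc, ← Complex.exp_add]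
          push_cast
          ring_nf


/-- The multi-moment map `m : ℂ² → ℝ³`, `m(z,w) = (Re(zw), Im(zw), ½(|z|² − |w|²))`. -/
noncomputable def mMap (p : ℂ × ℂ) : Fin 3 → ℝ :=
  ![(p.1 * p.2).re, (p.1 * p.2).im,
    (‖p.1‖ ^ 2 - ‖p.2‖ ^ 2) / 2]


lemma aux_real {u v u' v' : ℝ} (hu : 0 ≤ u) (hv : 0 ≤ v) (hu' : 0 ≤ u') (hv' : 0 ≤ v')
    (h1 : u * v = u' * v') (h2 : u - v = u' - v') : u = u' ∧ v = v' := by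
  have h3 : (u + v) ^ 2 = (u' + v') ^ 2 := by linear_combination (u - v + u' - v') * h2 + 4 * h1
  have h4 : u + v = u' + v' := by
    have := congrArg Real.sqrt h3
    rwa [Real.sqrt_sq (by linarith), Real.sqrt_sq (by linarith)] at this
  constructor <;> linarith

lemma mMap_eq_iff {p q : ℂ × ℂ} (h : mMap p = mMap q) :
    p.1 * p.2 = q.1 * q.2 ∧ ‖p.1‖ = ‖q.1‖ ∧
      ‖p.2‖ = ‖q.2‖ := by
  have h0 := congrFun h 0
  have h1 := congrFun h 1
  have h2 := congrFun h 2
  simp only [mMap, Matrix.cons_val_zero, Matrix.cons_val_one, Matrix.head_cons,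
    Matrix.cons_val_two, Matrix.tail_cons] at h0 h1 h2
  have hprod : p.1 * p.2 = q.1 * q.2 := Complex.ext h0 h1
  have habs : ‖p.1‖ * ‖p.2‖ = ‖q.1‖ * ‖q.2‖ := by
    rw [← norm_mul, ← norm_mul, hprod]
  have hsq : ‖p.1‖ ^ 2 * ‖p.2‖ ^ 2
      = ‖q.1‖ ^ 2 * ‖q.2‖ ^ 2 := by
    rw [← mul_pow, ← mul_pow, habs]
  have hd : ‖p.1‖ ^ 2 - ‖p.2‖ ^ 2
      = ‖q.1‖ ^ 2 - ‖q.2‖ ^ 2 := by linarith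
  obtain ⟨e1, e2⟩ := aux_real (sq_nonneg _) (sq_nonneg _) (sq_nonneg _) (sq_nonneg _) hsq hd
  refine ⟨hprod, ?_, ?_⟩
  · have := congrArg Real.sqrt e1
    rwa [Real.sqrt_sq (norm_nonneg _), Real.sqrt_sq (norm_nonneg _)] at this
  · have := congrArg Real.sqrt e2
    rwa [Real.sqrt_sq (norm_nonneg _), Real.sqrt_sq (norm_nonneg _)] at this


lemma exists_theta {z z' : ℂ} (h : ‖z‖ = ‖z'‖) (hz : z ≠ 0) :
    ∃ θ : ℝ, z' = Complex.exp (θ * Complex.I) * z := by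
  refine ⟨(z' / z).arg, ?_⟩
  have habs : ‖z' / z‖ = 1 := by
    rw [norm_div, ← h, div_self]
    exact norm_ne_zero_iff.mpr hz
  have := Complex.norm_mul_exp_arg_mul_I (z' / z)
  rw [habs, Complex.ofReal_one, one_mul] at this
  rw [this, div_mul_cancel₀ _ hz]

lemma rel_of_eq {p q : ℂ × ℂ}
    (hprod : p.1 * p.2 = q.1 * q.2) (h1 : ‖p.1‖ = ‖q.1‖)
    (h2 : ‖p.2‖ = ‖q.2‖) : ∃ θ : ℝ, q = circleAct θ p := by
  by_cases hz : p.1 = 0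
  · have hq1 : q.1 = 0 := by
      rw [← norm_eq_zero, ← h1, hz, norm_zero]
    by_cases hw : p.2 = 0
    · have hq2 : q.2 = 0 := by rw [← norm_eq_zero, ← h2, hw, norm_zero]
      exact ⟨0, by simp [circleAct, hz, hw, hq1, hq2, Prod.ext_iff]⟩
    · obtain ⟨φ, hφ⟩ := exists_theta h2 hw
      refine ⟨-φ, ?_⟩
      simp only [circleAct, Prod.ext_iff, hz, mul_zero, hq1, true_and]
      rw [hφ]
      push_cast
      ring_nf
  · obtain ⟨θ, hθ⟩ := exists_theta h1 hz
    refine ⟨θ, ?_⟩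
    have hexp : Complex.exp (-θ * Complex.I) * Complex.exp (θ * Complex.I) = 1 := by
      rw [← Complex.exp_add]; ring_nf; exact Complex.exp_zero
    have hq2 : q.2 = Complex.exp (-θ * Complex.I) * p.2 := by
      rw [hθ] at hprod
      have key : p.1 * (Complex.exp (θ * Complex.I) * q.2) = p.1 * p.2 := by
        rw [hprod]; ring
      have key2 := mul_left_cancel₀ hz key
      calc q.2 = Complex.exp (-θ * Complex.I) * (Complex.exp (θ * Complex.I) * q.2) := by
            rw [← mul_assoc, hexp, one_mul]
        _ = Complex.exp (-θ * Complex.I) * p.2 := by rw [key2]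
    exact Prod.ext hθ hq2


lemma mMap_surj : Function.Surjective mMap := by
  intro y
  set a := y 0 with ha
  set b := y 1 with hb
  set c := y 2 with hc
  set s := Real.sqrt (a ^ 2 + b ^ 2 + c ^ 2) with hs
  have hs0 : 0 ≤ s := Real.sqrt_nonneg _
  have hssq : s ^ 2 = a ^ 2 + b ^ 2 + c ^ 2 := Real.sq_sqrt (by positivity)
  have hcs : |c| ≤ s := by
    rw [← Real.sqrt_sq_eq_abs, hs]
    exact Real.sqrt_le_sqrt (by nlinarith [sq_nonneg a, sq_nonneg b])
  have hu0 : 0 ≤ s + c := by cases abs_le.mp hcs; linarith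
  have hv0 : 0 ≤ s - c := by cases abs_le.mp hcs; linarith
  by_cases hu : s + c = 0
  · -- then a = b = 0
    have hab : a = 0 ∧ b = 0 := by
      constructor <;> nlinarith [sq_nonneg a, sq_nonneg b, sq_nonneg c]
    refine ⟨(0, (Real.sqrt (s - c) : ℝ)), ?_⟩
    funext i
    fin_cases i <;>
      simp [mMap, ha, hb, hc, hab.1, hab.2, Complex.norm_real, Real.norm_eq_abs,
        abs_of_nonneg (Real.sqrt_nonneg (s - c)), Real.sq_sqrt hv0, Real.sq_sqrt (show 0 ≤ s - y 2 by linarith)] <;>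
      linarith
  · have hupos : 0 < s + c := lt_of_le_of_ne hu0 (Ne.symm hu)
    set r := Real.sqrt (s + c) with hr
    have hrpos : 0 < r := Real.sqrt_pos.mpr hupos
    have hrsq : r ^ 2 = s + c := Real.sq_sqrt hu0
    refine ⟨((r : ℂ), (a + b * Complex.I) / r), ?_⟩
    have hrne : (r : ℂ) ≠ 0 := by
      simp only [ne_eq, Complex.ofReal_eq_zero]
      exact hrpos.ne'
    have hzw : (r : ℂ) * ((a + b * Complex.I) / r) = a + b * Complex.I := by
      field_simp
    funext i
    fin_cases i
    · simp [mMap, hzw]; exact ha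
    · simp [mMap, hzw]; exact hb
    · simp only [mMap, Matrix.cons_val_two, Matrix.tail_cons, Matrix.head_cons,
        Matrix.cons_val_one]
      rw [norm_div, Complex.norm_real, Real.norm_eq_abs, abs_of_nonneg hrpos.le]
      rw [div_pow, Complex.sq_norm]
      have hns : Complex.normSq (a + b * Complex.I) = a ^ 2 + b ^ 2 := by
        simp [Complex.normSq_apply]; ring
      rw [hns, hrsq]
      have key : a ^ 2 + b ^ 2 = (s + c) * (s - c) := by nlinarith
      rw [key]
      field_simp
      ring_nf
      exact hc


lemma mMap_invariant (θ : ℝ) (p : ℂ × ℂ) : mMap (circleAct θ p) = mMap p := by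
  have hprod : (circleAct θ p).1 * (circleAct θ p).2 = p.1 * p.2 := by
    simp only [circleAct]
    rw [mul_mul_mul_comm, ← Complex.exp_add]
    ring_nf
    rw [Complex.exp_zero]; ring
  have habs1 : ‖(circleAct θ p).1‖ = ‖p.1‖ := by
    simp [circleAct, Complex.norm_exp_ofReal_mul_I]
  have habs2 : ‖(circleAct θ p).2‖ = ‖p.2‖ := by
    simp only [circleAct, norm_mul]
    rw [show -(θ : ℂ) * Complex.I = ((-θ : ℝ) : ℂ) * Complex.I by push_cast; ring,
      Complex.norm_exp_ofReal_mul_I, one_mul]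
  unfold mMap
  rw [hprod, habs1, habs2]

lemma mMap_continuous : Continuous mMap := by
  unfold mMap
  refine continuous_pi fun i => ?_
  fin_cases i
  · exact Complex.continuous_re.comp (continuous_fst.mul continuous_snd)
  · exact Complex.continuous_im.comp (continuous_fst.mul continuous_snd)
  · exact (((continuous_norm.comp continuous_fst).pow 2).sub
      ((continuous_norm.comp continuous_snd).pow 2)).div_const 2

lemma mMap_bound (p : ℂ × ℂ) : ‖p‖ ^ 2 ≤ 2 * Real.sqrt 3 * ‖mMap p‖ := by
  obtain ⟨z, w⟩ := p
  have hM0 : (0:ℝ) ≤ ‖mMap (z, w)‖ := norm_nonneg _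
  have hia : |(z * w).re| ≤ ‖mMap (z, w)‖ := by
    simpa only [mMap, Matrix.cons_val_zero, Real.norm_eq_abs]
      using norm_le_pi_norm (mMap (z, w)) 0
  have hib : |(z * w).im| ≤ ‖mMap (z, w)‖ := by
    simpa only [mMap, Matrix.cons_val_one, Matrix.head_cons, Matrix.cons_val_zero, Real.norm_eq_abs]
      using norm_le_pi_norm (mMap (z, w)) 1
  have hic : |(‖z‖ ^ 2 - ‖w‖ ^ 2) / 2| ≤ ‖mMap (z, w)‖ := by
    simpa only [mMap, Matrix.cons_val_two, Matrix.tail_cons, Matrix.head_cons,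
      Real.norm_eq_abs] using norm_le_pi_norm (mMap (z, w)) 2
  have hab : (z * w).re ^ 2 + (z * w).im ^ 2 = ‖z‖ ^ 2 * ‖w‖ ^ 2 := by
    rw [Complex.sq_norm, Complex.sq_norm, ← Complex.normSq_mul, Complex.normSq_apply]
    ring
  have hsq1 : (z * w).re ^ 2 ≤ ‖mMap (z, w)‖ ^ 2 := by
    rw [← sq_abs]; exact pow_le_pow_left₀ (abs_nonneg _) hia 2
  have hsq2 : (z * w).im ^ 2 ≤ ‖mMap (z, w)‖ ^ 2 := by
    rw [← sq_abs]; exact pow_le_pow_left₀ (abs_nonneg _) hib 2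
  have hsq3 : ((‖z‖ ^ 2 - ‖w‖ ^ 2) / 2) ^ 2 ≤ ‖mMap (z, w)‖ ^ 2 := by
    rw [← sq_abs]; exact pow_le_pow_left₀ (abs_nonneg _) hic 2
  have h4 : ((‖z‖ ^ 2 + ‖w‖ ^ 2) / 2) ^ 2
      = (z * w).re ^ 2 + (z * w).im ^ 2 + ((‖z‖ ^ 2 - ‖w‖ ^ 2) / 2) ^ 2 := by
    linear_combination -hab
  have h5 : ((‖z‖ ^ 2 + ‖w‖ ^ 2) / 2) ^ 2
      ≤ (Real.sqrt 3 * ‖mMap (z, w)‖) ^ 2 := by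
    rw [mul_pow, Real.sq_sqrt (by norm_num : (0:ℝ) ≤ 3)]
    linarith
  have h6 : (‖z‖ ^ 2 + ‖w‖ ^ 2) / 2 ≤ Real.sqrt 3 * ‖mMap (z, w)‖ := by
    have := Real.sqrt_le_sqrt h5
    rwa [Real.sqrt_sq (by positivity), Real.sqrt_sq (by positivity)] at this
  have hz2 : ‖z‖ = ‖z‖ := rfl
  have hw2 : ‖w‖ = ‖w‖ := rfl
  rw [Prod.norm_def, hz2, hw2]
  rcases max_cases (‖z‖) (‖w‖) with ⟨h, _⟩ | ⟨h, _⟩ <;> rw [h] <;>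
    nlinarith [sq_nonneg (‖z‖), sq_nonneg (‖w‖)]


lemma rel_of_mMap_eq {p q : ℂ × ℂ} (h : mMap p = mMap q) : ∃ θ : ℝ, q = circleAct θ p := by
  obtain ⟨h1, h2, h3⟩ := mMap_eq_iff h
  exact rel_of_eq h1 h2 h3

lemma mMap_isProperMap : IsProperMap mMap := by
  rw [isProperMap_iff_isCompact_preimage]
  refine ⟨mMap_continuous, fun K hK => ?_⟩
  refine Metric.isCompact_of_isClosed_isBounded (hK.isClosed.preimage mMap_continuous) ?_
  obtain ⟨C, hC⟩ := hK.isBounded.exists_norm_le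
  rw [isBounded_iff_forall_norm_le]
  refine ⟨Real.sqrt (2 * Real.sqrt 3 * C), fun p hp => ?_⟩
  have h1 : ‖p‖ ^ 2 ≤ 2 * Real.sqrt 3 * C := by
    have := mMap_bound p
    have h2 := hC _ hp
    nlinarith [Real.sqrt_nonneg (3:ℝ), norm_nonneg (mMap p)]
  calc ‖p‖ = Real.sqrt (‖p‖ ^ 2) := (Real.sqrt_sq (norm_nonneg p)).symm
    _ ≤ Real.sqrt (2 * Real.sqrt 3 * C) := Real.sqrt_le_sqrt h1

/-- `m` is `S¹`-invariant and induces a homeomorphism `ℂ²/S¹ → ℝ³`. -/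
theorem m_invariant_and_induces_homeomorph :
    (∀ (θ : ℝ) (p : ℂ × ℂ), mMap (circleAct θ p) = mMap p) ∧
    ∃ h : Quotient circleSetoid ≃ₜ (Fin 3 → ℝ),
      ∀ p : ℂ × ℂ, h (Quotient.mk circleSetoid p) = mMap p := by
  refine ⟨mMap_invariant, ?_⟩
  have hresp : ∀ a b : ℂ × ℂ, circleSetoid.r a b → mMap a = mMap b := by
    rintro a b ⟨θ, rfl⟩
    exact (mMap_invariant θ a).symm
  let f : Quotient circleSetoid → (Fin 3 → ℝ) := Quotient.lift mMap hresp
  have hfmk : ∀ p : ℂ × ℂ, f (Quotient.mk circleSetoid p) = mMap p := fun p => rfl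
  have hsurj : Function.Surjective f := fun y => by
    obtain ⟨p, hp⟩ := mMap_surj y
    exact ⟨Quotient.mk circleSetoid p, hp⟩
  have hinj : Function.Injective f := by
    intro x y
    refine Quotient.inductionOn₂ x y fun p q h => ?_
    exact Quotient.sound (rel_of_mMap_eq h)
  have fcont : Continuous f := mMap_continuous.quotient_lift hresp
  have hqmk : Topology.IsQuotientMap (Quotient.mk circleSetoid) := isQuotientMap_quot_mk
  have hqm : Topology.IsQuotientMap mMap :=
    (mMap_isProperMap.isClosedMap).isQuotientMap mMap_continuous mMap_surj
  have hqmf : Topology.IsQuotientMap f :=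
    Topology.IsQuotientMap.of_comp hqmk.continuous fcont hqm
  let e : Quotient circleSetoid ≃ (Fin 3 → ℝ) := Equiv.ofBijective f ⟨hinj, hsurj⟩
  have cinv : Continuous e.symm := by
    refine continuous_def.mpr fun U hU => ?_
    have h1 : e.symm ⁻¹' U = f '' U := by
      rw [← Equiv.image_eq_preimage_symm]
      rfl
    rw [h1]
    have h2 : f ⁻¹' (f '' U) = U := Set.preimage_image_eq U hinj
    exact hqmf.isOpen_preimage.mp (by rwa [h2])
  exact ⟨⟨e, fcont, cinv⟩, fun p => rfl⟩
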